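/- Let G be a finite DAG and X, Y, Z disjoint (not necessarily exhaustive) subsets of vertices with X, Y d-separated by Z. Then in the ancestral closure An(X ∪ Y ∪ Z), there exists a partition X̃ ⊇ X, Ỹ ⊇ Y, Z of all vertices of the induced subgraph on An(X ∪ Y ∪ Z) such that Z still d-separates X̃ from Ỹ. -/

import Mathlib

open Classical

/-- Ancestors of a set `W` of vertices: all `u` with a directed path (possibly of
length 0) from `u` to some element of `W`. -/
def An {V : Type} (E : V → V → Prop) (W : Set V) : Set V :=
  {u | ∃ w ∈ W, Relation.ReflTransGen E u w}

/-- Parents of a vertex `v`. -/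
def Pa {V : Type} (E : V → V → Prop) (v : V) : Set V := {u | E u v}

/-- Acyclicity of a directed graph. -/
def IsAcyclicDigraph {V : Type} (E : V → V → Prop) : Prop :=
  ∀ v, ¬ Relation.TransGen E v v

/-- Marginal of a joint distribution `P` on `∏ v, X v` onto the coordinates in `S`,
evaluated at (the `S`-coordinates of) `x`. -/
noncomputable def marg {V : Type} [Fintype V] [DecidableEq V] {X : V → Type}
    [∀ v, Fintype (X v)] (P : (∀ v, X v) → ℝ) (S : Set V) (x : ∀ v, X v) : ℝ :=
  ∑ y : ∀ v, X v, if ∀ v ∈ S, y v = x v then P y else 0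

/-- Conditional independence `A ⊥ B | S` for a finite joint distribution `P`:
`P(a,b,s)·P(s) = P(a,s)·P(b,s)` for all values (phrased via marginals). -/
def CondIndep {V : Type} [Fintype V] [DecidableEq V] {X : V → Type}
    [∀ v, Fintype (X v)] (P : (∀ v, X v) → ℝ) (A B S : Set V) : Prop :=
  ∀ x : ∀ v, X v,
    marg P (A ∪ B ∪ S) x * marg P S x = marg P (A ∪ S) x * marg P (B ∪ S) x

/-- `P` factorizes according to the directed graph `E`: `P(x) = ∏ v K v (x)` for
stochastic kernels `K v` depending only on the coordinate `v` and its parents. -/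
def Factorizes {V : Type} [Fintype V] [DecidableEq V] {X : V → Type}
    [∀ v, Fintype (X v)] (E : V → V → Prop) (P : (∀ v, X v) → ℝ) : Prop :=
  ∃ K : (v : V) → (∀ u, X u) → ℝ,
    (∀ v x, 0 ≤ K v x) ∧
    (∀ v x, ∑ a : X v, K v (Function.update x v a) = 1) ∧
    (∀ v x x', x v = x' v → (∀ u, E u v → x u = x' u) → K v x = K v x') ∧
    (∀ x, P x = ∏ v, K v x)

/-- An undirected walk in the directed graph `E`. -/
def IsUWalk {V : Type} (E : V → V → Prop) (p : List V) : Prop :=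
  p.Chain' fun a b => E a b ∨ E b a

/-- An undirected path `p` is blocked by `Z` (Pearl): it contains a chain or fork
whose middle vertex is in `Z`, or a collider whose middle vertex is not an ancestor
of `Z`. -/
def Blocked {V : Type} (E : V → V → Prop) (Z : Set V) (p : List V) : Prop :=
  ∃ (i : ℕ) (a m b : V), p[i]? = some a ∧ p[i+1]? = some m ∧ p[i+2]? = some b ∧
    ((((E a m ∧ E m b) ∨ (E m a ∧ E b m) ∨ (E m a ∧ E m b)) ∧ m ∈ Z) ∨
      ((E a m ∧ E b m) ∧ m ∉ An E Z))

/-- Classical d-separation: every undirected path between `X` and `Y` is blocked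
by `Z`. -/
def DSep {V : Type} (E : V → V → Prop) (X Y Z : Set V) : Prop :=
  ∀ p : List V, IsUWalk E p → p.Nodup →
    (∃ x ∈ X, p.head? = some x) → (∃ y ∈ Y, p.getLast? = some y) → Blocked E Z p


section AuxDsep

variable {V : Type} {E : V → V → Prop} {Z X Y : Set V}

/-- The triple `(a, m, b)` does not witness blockage. -/
def TripleOk (E : V → V → Prop) (Z : Set V) (a m b : V) : Prop :=
  ¬ ((((E a m ∧ E m b) ∨ (E m a ∧ E b m) ∨ (E m a ∧ E m b)) ∧ m ∈ Z) ∨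
      ((E a m ∧ E b m) ∧ m ∉ An E Z))

lemma notBlocked_iff {p : List V} :
    ¬ Blocked E Z p ↔ ∀ i a m b, p[i]? = some a → p[i+1]? = some m → p[i+2]? = some b →
      TripleOk E Z a m b := by
  constructor
  · intro h i a m b h1 h2 h3 hbad
    exact h ⟨i, a, m, b, h1, h2, h3, hbad⟩
  · rintro h ⟨i, a, m, b, h1, h2, h3, hbad⟩
    exact h i a m b h1 h2 h3 hbad

lemma chain'_getElem? {R : V → V → Prop} {p : List V} (h : p.Chain' R) {i : ℕ} {a b : V}
    (h1 : p[i]? = some a) (h2 : p[i+1]? = some b) : R a b := by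
  obtain ⟨hi1, e1⟩ := List.getElem?_eq_some_iff.mp h1
  obtain ⟨hi2, e2⟩ := List.getElem?_eq_some_iff.mp h2
  have := List.isChain_iff_getElem.mp h i (by omega)
  simpa [List.get_eq_getElem, e1, e2] using this

lemma not_both (hacyc : IsAcyclicDigraph E) {u v : V} (h : E u v) : ¬ E v u :=
  fun h' => hacyc u (Relation.TransGen.head h (Relation.TransGen.single h'))

lemma not_self (hacyc : IsAcyclicDigraph E) {u : V} : ¬ E u u :=
  fun h => hacyc u (Relation.TransGen.single h)

lemma prefix_getElem?_eq {p q : List V} (hq : q <+: p) {i : ℕ} {x : V} (h : q[i]? = some x) :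
    p[i]? = some x := by
  obtain ⟨r, rfl⟩ := hq
  have hi : i < q.length := (List.getElem?_eq_some_iff.mp h).1
  rw [List.getElem?_append, if_pos hi]
  exact h

lemma notBlocked_prefix {p q : List V} (h : ¬ Blocked E Z p) (hq : q <+: p) :
    ¬ Blocked E Z q := by
  rintro ⟨i, a, m, b, h1, h2, h3, bad⟩
  exact h ⟨i, a, m, b, prefix_getElem?_eq hq h1, prefix_getElem?_eq hq h2,
    prefix_getElem?_eq hq h3, bad⟩

lemma notBlocked_suffix {p q : List V} (h : ¬ Blocked E Z p) (hq : q <:+ p) :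
    ¬ Blocked E Z q := by
  obtain ⟨r, rfl⟩ := hq
  rintro ⟨i, a, m, b, h1, h2, h3, bad⟩
  refine h ⟨r.length + i, a, m, b, ?_, ?_, ?_, bad⟩
  · rw [List.getElem?_append_right (Nat.le_add_right _ _)]
    simpa using h1
  · rw [show r.length + i + 1 = r.length + (i+1) by omega,
      List.getElem?_append_right (Nat.le_add_right _ _)]
    simpa using h2
  · rw [show r.length + i + 2 = r.length + (i+2) by omega,
      List.getElem?_append_right (Nat.le_add_right _ _)]
    simpa using h3

lemma active_append {w1 w2 : List V} {v : V}
    (h1 : w1.getLast? = some v) (h2 : w2.head? = some v)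
    (hu1 : IsUWalk E w1) (hu2 : IsUWalk E w2)
    (hb1 : ¬ Blocked E Z w1) (hb2 : ¬ Blocked E Z w2)
    (hj : ∀ a b, w1[w1.length - 2]? = some a → w2[1]? = some b → TripleOk E Z a v b) :
    IsUWalk E (w1 ++ w2.tail) ∧ ¬ Blocked E Z (w1 ++ w2.tail) ∧
      (w1 ++ w2.tail).head? = w1.head? ∧ (w1 ++ w2.tail).getLast? = w2.getLast? := by
  have hn1 : w1 ≠ [] := by rintro rfl; simp at h1
  have hn : 1 ≤ w1.length := List.length_pos_iff.mpr hn1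
  have hvlast : w1[w1.length - 1]? = some v := by rw [← List.getLast?_eq_getElem?]; exact h1
  have htail : ∀ j : ℕ, w2.tail[j]? = w2[j+1]? := by
    intro j; rw [List.getElem?_tail]
  have hA : ∀ k, k < w1.length → (w1 ++ w2.tail)[k]? = w1[k]? := by
    intro k hk; rw [List.getElem?_append, if_pos hk]
  have hC : ∀ k, w1.length - 1 ≤ k → (w1 ++ w2.tail)[k]? = w2[k - (w1.length - 1)]? := by
    intro k hk
    rcases eq_or_lt_of_le hk with heq | hlt
    · rw [← heq, hA _ (by omega), hvlast, Nat.sub_self, ← List.head?_eq_getElem?, h2]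
    · have hk' : w1.length ≤ k := by omega
      rw [List.getElem?_append_right hk', htail]
      congr 1
      omega
  refine ⟨?_, ?_, ?_, ?_⟩
  · rw [IsUWalk, List.Chain', List.isChain_append]
    refine ⟨hu1, List.IsChain.tail hu2, ?_⟩
    intro x hx y hy
    have hx' : x = v := by rw [h1] at hx; simpa using hx.symm
    have hy' : w2[1]? = some y := by rw [← htail 0, ← List.head?_eq_getElem?]; exact hy
    subst hx'
    exact chain'_getElem? hu2 (by rw [← List.head?_eq_getElem?]; exact h2) hy'
  · rw [notBlocked_iff]
    intro i a m b g1 g2 g3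
    by_cases hc1 : i + 2 < w1.length
    · refine notBlocked_iff.mp hb1 i a m b ?_ ?_ ?_
      · rw [← hA _ (by omega)]; exact g1
      · rw [← hA _ (by omega)]; exact g2
      · rw [← hA _ (by omega)]; exact g3
    by_cases hc2 : i + 2 = w1.length
    · have ha : w1[w1.length - 2]? = some a := by
        rw [show w1.length - 2 = i by omega, ← hA _ (by omega)]; exact g1
      have hm : m = v := by
        have := g2
        rw [hA _ (by omega), show i+1 = w1.length - 1 by omega, hvlast] at this
        simpa using this.symm
      have hbb : w2[1]? = some b := by
        have := g3
        rw [hC _ (by omega), show i + 2 - (w1.length - 1) = 1 by omega] at this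
        exact this
      rw [hm]
      exact hj a b ha hbb
    · have hge : w1.length - 1 ≤ i := by omega
      refine notBlocked_iff.mp hb2 (i - (w1.length - 1)) a m b ?_ ?_ ?_
      · rw [← hC _ hge] at *; exact g1
      · rw [show i - (w1.length - 1) + 1 = i + 1 - (w1.length - 1) by omega, ← hC _ (by omega)]
        exact g2
      · rw [show i - (w1.length - 1) + 2 = i + 2 - (w1.length - 1) by omega, ← hC _ (by omega)]
        exact g3
  · rw [List.head?_append]
    rcases w1 with _ | ⟨a, t⟩
    · exact absurd rfl hn1
    · simp
  · rcases w2 with _ | ⟨v', t⟩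
    · simp at h2
    · rcases t with _ | ⟨c, t'⟩
      · have : v' = v := by simpa using h2
        simp [h1, this]
      · rw [List.getLast?_append]
        simp only [List.tail_cons]
        have hsome : ∃ w, (c :: t').getLast? = some w :=
          Option.isSome_iff_exists.mp (List.getLast?_isSome (l := c :: t') |>.mpr (by simp))
        obtain ⟨w, hw⟩ := hsome
        rw [hw, List.getLast?_cons_cons, hw]
        rfl

lemma chain_reaches {a : V} {l : List V} (h : List.Chain E a l) :
    ∀ s ∈ a :: l, Relation.ReflTransGen E a s ∧
      Relation.ReflTransGen E s ((a :: l).getLast (List.cons_ne_nil a l)) := by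
  induction l generalizing a with
  | nil =>
    intro s hs
    have : s = a := by simpa using hs
    subst this
    exact ⟨Relation.ReflTransGen.refl, by simp [Relation.ReflTransGen.refl]⟩
  | cons b t ih =>
    obtain ⟨hab, hbt⟩ := List.chain_cons.mp h
    have hlast : (a :: b :: t).getLast (List.cons_ne_nil _ _) =
        (b :: t).getLast (List.cons_ne_nil _ _) := List.getLast_cons (List.cons_ne_nil _ _)
    intro s hs
    rcases List.mem_cons.mp hs with rfl | hs'
    · refine ⟨Relation.ReflTransGen.refl, ?_⟩
      rw [hlast]
      exact Relation.ReflTransGen.head hab (ih hbt b List.mem_cons_self).2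
    · obtain ⟨hh1, hh2⟩ := ih hbt s hs'
      exact ⟨Relation.ReflTransGen.head hab hh1, by rw [hlast]; exact hh2⟩

lemma mem_of_getElem?' {l : List V} {n : ℕ} {x : V} (h : l[n]? = some x) : x ∈ l := by
  obtain ⟨hn, rfl⟩ := List.getElem?_eq_some_iff.mp h
  exact List.getElem_mem hn

lemma active_down (hacyc : IsAcyclicDigraph E) {a : V} {l : List V} (h : List.Chain E a l)
    (hZ : ∀ s ∈ a :: l, s ∉ Z) : IsUWalk E (a :: l) ∧ ¬ Blocked E Z (a :: l) := by
  have hch : (a :: l).Chain' E := h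
  constructor
  · exact hch.imp (fun {a b} h => Or.inl h)
  · rw [notBlocked_iff]
    intro i x y z g1 g2 g3
    have exy := chain'_getElem? hch g1 g2
    have eyz := chain'_getElem? hch g2 g3
    have hyZ : y ∉ Z := hZ y (mem_of_getElem?' g2)
    rintro (⟨_, hy⟩ | ⟨⟨_, hzy⟩, _⟩)
    · exact hyZ hy
    · exact not_both hacyc eyz hzy

lemma active_up (hacyc : IsAcyclicDigraph E) {a : V} {l : List V} (h : List.Chain E a l)
    (hZ : ∀ s ∈ a :: l, s ∉ Z) :
    IsUWalk E (a :: l).reverse ∧ ¬ Blocked E Z (a :: l).reverse := by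
  have hch : (a :: l).Chain' E := h
  have hrev : ((a :: l).reverse).Chain' (fun x y => E y x) := List.isChain_reverse.mpr hch
  constructor
  · exact hrev.imp (fun {a b} h => Or.inr h)
  · rw [notBlocked_iff]
    intro i x y z g1 g2 g3
    have eyx := chain'_getElem? hrev g1 g2
    have ezy := chain'_getElem? hrev g2 g3
    have hyZ : y ∉ Z := hZ y (by
      have := mem_of_getElem?' g2
      rw [List.mem_reverse] at this
      exact this)
    rintro (⟨_, hy⟩ | ⟨⟨hxy, _⟩, _⟩)
    · exact hyZ hy
    · exact not_both hacyc eyx hxy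

lemma chain_head_edge {a c : V} {l : List V} (h : List.Chain E a l) (hc : l[0]? = some c) :
    E a c := by
  rcases l with _ | ⟨b, t⟩
  · simp at hc
  · have hbc : b = c := by simpa using hc
    exact hbc ▸ (List.chain_cons.mp h).1

lemma detour {X Y : Set V} {a : V} (ha : a ∈ An E (X ∪ Y ∪ Z)) (hz : a ∉ An E Z) :
    ∃ l : List V, List.Chain E a l ∧ (a :: l).getLast (List.cons_ne_nil a l) ∈ X ∪ Y ∧
      ∀ s ∈ a :: l, s ∉ Z ∧ s ∈ An E (X ∪ Y ∪ Z) := by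
  obtain ⟨w, hw, hr⟩ := ha
  obtain ⟨l, hchain, hlast⟩ := List.exists_isChain_cons_of_relationReflTransGen hr
  have hreach := chain_reaches hchain
  have hnotZ : ∀ s ∈ a :: l, s ∉ Z := by
    intro s hs hsZ
    exact hz ⟨s, hsZ, (hreach s hs).1⟩
  refine ⟨l, hchain, ?_, fun s hs => ⟨hnotZ s hs, ⟨w, hw, by rw [← hlast]; exact (hreach s hs).2⟩⟩⟩
  rw [hlast]
  rcases hw with hw | hw
  · exact hw
  · exact absurd hw (by rw [← hlast]; exact hnotZ _ (List.getLast_mem _))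

lemma exists_dup_decomp {l : List V} (h : ¬ l.Nodup) :
    ∃ (l₁ : List V) (v : V) (l₂ l₃ : List V), l = l₁ ++ v :: l₂ ++ v :: l₃ := by
  induction l with
  | nil => simp at h
  | cons a t ih =>
    by_cases ha : a ∈ t
    · obtain ⟨l₂, l₃, rfl⟩ := List.append_of_mem ha
      exact ⟨[], a, l₂, l₃, by simp⟩
    · have ht : ¬ t.Nodup := fun hn => h (List.nodup_cons.mpr ⟨ha, hn⟩)
      obtain ⟨l₁, v, l₂, l₃, rfl⟩ := ih ht
      exact ⟨a :: l₁, v, l₂, l₃, by simp⟩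

lemma active_splice (hacyc : IsAcyclicDigraph E) {l₁ l₂ l₃ : List V} {v : V}
    (hu : IsUWalk E (l₁ ++ v :: l₂ ++ v :: l₃))
    (hb : ¬ Blocked E Z (l₁ ++ v :: l₂ ++ v :: l₃)) :
    IsUWalk E (l₁ ++ v :: l₃) ∧ ¬ Blocked E Z (l₁ ++ v :: l₃) := by
  set p := l₁ ++ v :: l₂ ++ v :: l₃ with hp
  set m := l₁.length with hm
  set M := m + l₂.length + 1 with hM
  have hp2 : p = (l₁ ++ v :: l₂) ++ (v :: l₃) := by simp [hp]
  have hp1 : p = (l₁ ++ [v]) ++ (l₂ ++ v :: l₃) := by simp [hp]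
  have hlen : p.length = m + l₂.length + l₃.length + 2 := by
    rw [hp]; simp; omega
  have w1pre : (l₁ ++ [v]) <+: p := ⟨l₂ ++ v :: l₃, hp1.symm⟩
  have w2suf : (v :: l₃) <:+ p := ⟨l₁ ++ v :: l₂, hp2.symm⟩
  have hu1 : IsUWalk E (l₁ ++ [v]) := List.IsChain.prefix hu w1pre
  have hu2 : IsUWalk E (v :: l₃) := List.IsChain.suffix hu w2suf
  have hb1 := notBlocked_prefix hb w1pre
  have hb2 := notBlocked_suffix hb w2suf
  have hlast1 : (l₁ ++ [v]).getLast? = some v := by simp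
  have hhead2 : (v :: l₃).head? = some v := rfl
  have hlen12 : (l₁ ++ v :: l₂).length = M := by simp; omega
  have pm : p[m]? = some v := by
    rw [hp1, hm, List.getElem?_append, if_pos (by simp)]
    rw [List.getElem?_append_right (le_refl _)]
    simp
  have psuf : ∀ j : ℕ, p[M + j]? = (v :: l₃)[j]? := by
    intro j
    rw [hp2, List.getElem?_append_right (by omega)]
    congr 1
    omega
  have pM : p[M]? = some v := by
    have := psuf 0
    simpa using this
  have hok : ∀ i a m' b, p[i]? = some a → p[i+1]? = some m' → p[i+2]? = some b →
      TripleOk E Z a m' b := notBlocked_iff.mp hb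
  have hedge : ∀ {k : ℕ} {x y : V}, p[k]? = some x → p[k+1]? = some y → E x y ∨ E y x :=
    fun h1 h2 => chain'_getElem? hu h1 h2
  have hj : ∀ a b, (l₁ ++ [v])[(l₁ ++ [v]).length - 2]? = some a → (v :: l₃)[1]? = some b →
      TripleOk E Z a v b := by
    intro a b g1 g2
    have hgb : p[M + 1]? = some b := by rw [psuf 1]; exact g2
    have hMlt : M + 1 < p.length := (List.getElem?_eq_some_iff.mp hgb).1
    rcases Nat.eq_zero_or_pos m with hm0 | hm1
    · have e0 : (l₁ ++ [v]).length - 2 = 0 := by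
        simp only [List.length_append, List.length_cons, List.length_nil]
        omega
      rw [e0] at g1
      have hl1nil : l₁ = [] := List.length_eq_zero_iff.mp hm0
      have hav : a = v := by
        rw [hl1nil] at g1
        simpa using g1.symm
      subst hav
      rintro (⟨(⟨h, _⟩ | ⟨h, _⟩ | ⟨h, _⟩), _⟩ | ⟨⟨h, _⟩, _⟩) <;> exact not_self hacyc h
    · have hga : p[m - 1]? = some a := by
        have e1 : (l₁ ++ [v]).length - 2 = m - 1 := by
          simp only [List.length_append, List.length_cons, List.length_nil]
          omega
        rw [e1] at g1
        exact prefix_getElem?_eq w1pre g1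
      obtain ⟨c, hgc⟩ : ∃ c, p[m + 1]? = some c :=
        ⟨_, List.getElem?_eq_getElem (by omega)⟩
      obtain ⟨d, hgd⟩ : ∃ d, p[M - 1]? = some d :=
        ⟨_, List.getElem?_eq_getElem (by omega)⟩
      have em : m - 1 + 1 = m := by omega
      have em2 : m - 1 + 2 = m + 1 := by omega
      have eM : M - 1 + 1 = M := by omega
      have eM2 : M - 1 + 2 = M + 1 := by omega
      have hokm : TripleOk E Z a v c :=
        hok (m-1) a v c hga (by rw [em]; exact pm) (by rw [em2]; exact hgc)
      have hokM : TripleOk E Z d v b :=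
        hok (M-1) d v b hgd (by rw [eM]; exact pM) (by rw [eM2]; exact hgb)
      have evc : E v c ∨ E c v := hedge pm hgc
      have edv : E d v ∨ E v d := hedge hgd (by rw [eM]; exact pM)
      intro bad
      rcases bad with ⟨hpat, hvZ⟩ | ⟨⟨hav, hbv⟩, hvAn⟩
      · have hout : E v a ∨ E v b := by
          rcases hpat with ⟨h1, h2⟩ | ⟨h1, h2⟩ | ⟨h1, h2⟩
          · exact Or.inr h2
          · exact Or.inl h1
          · exact Or.inl h1
        rcases hout with hva | hvb
        · rcases evc with hvc | hcv
          · exact hokm (Or.inl ⟨Or.inr (Or.inr ⟨hva, hvc⟩), hvZ⟩)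
          · exact hokm (Or.inl ⟨Or.inr (Or.inl ⟨hva, hcv⟩), hvZ⟩)
        · rcases edv with hdv | hvd
          · exact hokM (Or.inl ⟨Or.inl ⟨hdv, hvb⟩, hvZ⟩)
          · exact hokM (Or.inl ⟨Or.inr (Or.inr ⟨hvd, hvb⟩), hvZ⟩)
      · have hvc : E v c := by
          rcases evc with h | h
          · exact h
          · exact absurd (Or.inr ⟨⟨hav, h⟩, hvAn⟩) hokm
        have hvd : E v d := by
          rcases edv with h | h
          · exact absurd (Or.inr ⟨⟨h, hbv⟩, hvAn⟩) hokM
          · exact h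
        set f : ℕ → V := fun k => (p[k]?).getD v with hfdef
        have hf : ∀ k, k < p.length → p[k]? = some (f k) := by
          intro k hk
          have h' : p[k]? = some p[k] := List.getElem?_eq_getElem hk
          simp only [hfdef]
          rw [h']
          rfl
        have feq : ∀ {k : ℕ} {x : V}, p[k]? = some x → f k = x := by
          intro k x hx
          have hk : k < p.length := (List.getElem?_eq_some_iff.mp hx).1
          have := hf k hk
          rw [hx] at this
          exact (Option.some_inj.mp this).symm
        have hfm : f m = v := feq pm
        have hfM : f M = v := feq pM
        have hfm1 : f (m+1) = c := feq hgc
        have hfM1 : f (M-1) = d := feq hgd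
        have hT : ∃ k, m ≤ k ∧ k ≤ M - 1 ∧ ¬ E (f k) (f (k+1)) := by
          refine ⟨M - 1, by omega, le_refl _, ?_⟩
          rw [eM, hfM1, hfM]
          exact not_both hacyc hvd
        have hk₀ := Nat.find_spec hT
        set k₀ := Nat.find hT with hk₀def
        have hk₀m : m < k₀ := by
          rcases Nat.lt_or_ge m k₀ with h | h
          · exact h
          · have : k₀ = m := by omega
            rw [this, hfm, hfm1] at hk₀
            exact absurd hvc hk₀.2.2
        have hfwd : ∀ j, m ≤ j → j < k₀ → E (f j) (f (j+1)) := by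
          intro j hj1 hj2
          by_contra hne
          exact Nat.find_min hT hj2 ⟨hj1, by omega, hne⟩
        have hcol1 : E (f (k₀ - 1)) (f k₀) := by
          have e : k₀ - 1 + 1 = k₀ := by omega
          have := hfwd (k₀ - 1) (by omega) (by omega)
          rwa [e] at this
        have hcol2 : E (f (k₀ + 1)) (f k₀) := by
          rcases hedge (hf k₀ (by omega)) (hf (k₀+1) (by omega)) with h | h
          · exact absurd h hk₀.2.2
          · exact h
        have hAnk : f k₀ ∈ An E Z := by
          by_contra hno
          have e1 : k₀ - 1 + 1 = k₀ := by omega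
          have e2 : k₀ - 1 + 2 = k₀ + 1 := by omega
          exact hok (k₀ - 1) (f (k₀-1)) (f k₀) (f (k₀+1))
            (hf _ (by omega)) (by rw [e1]; exact hf _ (by omega))
            (by rw [e2]; exact hf _ (by omega))
            (Or.inr ⟨⟨hcol1, hcol2⟩, hno⟩)
        have hreach : ∀ j, m ≤ j → j ≤ k₀ → Relation.ReflTransGen E v (f j) := by
          intro j hj
          induction j, hj using Nat.le_induction with
          | base => intro _; exact hfm ▸ Relation.ReflTransGen.refl
          | succ j hj ih =>
            intro hjk
            exact (ih (by omega)).tail (hfwd j hj (by omega))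
        refine hvAn ?_
        obtain ⟨z, hz, hrz⟩ := hAnk
        exact ⟨z, hz, (hreach k₀ (by omega) (le_refl _)).trans hrz⟩
  obtain ⟨hu', hb', -, -⟩ := active_append hlast1 hhead2 hu1 hu2 hb1 hb2 hj
  have heq : (l₁ ++ [v]) ++ (v :: l₃).tail = l₁ ++ v :: l₃ := by simp
  rw [heq] at hu' hb'
  exact ⟨hu', hb'⟩

lemma mem_of_getLast?' {l : List V} {x : V} (h : l.getLast? = some x) : x ∈ l := by
  rw [List.getLast?_eq_getElem?] at h
  exact mem_of_getElem?' h

lemma splice_head? {l₁ l₂ l₃ : List V} {v : V} :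
    (l₁ ++ v :: l₃).head? = (l₁ ++ v :: l₂ ++ v :: l₃).head? := by
  rcases l₁ with _ | ⟨a, t⟩ <;> simp

lemma splice_getLast? {l₁ l₂ l₃ : List V} {v : V} :
    (l₁ ++ v :: l₃).getLast? = (l₁ ++ v :: l₂ ++ v :: l₃).getLast? := by
  obtain ⟨w, hw⟩ : ∃ w, (v :: l₃).getLast? = some w :=
    Option.isSome_iff_exists.mp (List.getLast?_isSome.mpr (by simp))
  have h2 : (l₁ ++ v :: l₂ ++ v :: l₃) = (l₁ ++ v :: l₂) ++ (v :: l₃) := by simp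
  rw [h2, List.getLast?_append, List.getLast?_append, hw]
  rfl

lemma exists_nodup_active (hacyc : IsAcyclicDigraph E) {X Y : Set V} :
    ∀ n (p : List V), p.length ≤ n → IsUWalk E p → ¬ Blocked E Z p →
      (∃ x ∈ X, p.head? = some x) → (∃ y ∈ Y, p.getLast? = some y) →
      ∃ q : List V, IsUWalk E q ∧ ¬ Blocked E Z q ∧ (∃ x ∈ X, q.head? = some x) ∧
        (∃ y ∈ Y, q.getLast? = some y) ∧ q.Nodup := by
  intro n
  induction n with
  | zero =>
    intro p hl hu hb hx hy
    obtain ⟨x, _, hx'⟩ := hx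
    have : p = [] := List.length_eq_zero_iff.mp (Nat.le_zero.mp hl)
    subst this
    simp at hx'
  | succ n ih =>
    intro p hl hu hb hx hy
    by_cases hnd : p.Nodup
    · exact ⟨p, hu, hb, hx, hy, hnd⟩
    · obtain ⟨l₁, v, l₂, l₃, rfl⟩ := exists_dup_decomp hnd
      obtain ⟨hu', hb'⟩ := active_splice hacyc hu hb
      refine ih (l₁ ++ v :: l₃) ?_ hu' hb' ?_ ?_
      · simp only [List.length_append, List.length_cons] at hl ⊢
        omega
      · obtain ⟨x, hxX, hx'⟩ := hx
        exact ⟨x, hxX, by rw [splice_head? (l₂ := l₂)]; exact hx'⟩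
      · obtain ⟨y, hyY, hy'⟩ := hy
        exact ⟨y, hyY, by rw [splice_getLast? (l₂ := l₂)]; exact hy'⟩

lemma no_active_walk (hacyc : IsAcyclicDigraph E) {X Y : Set V} (hsep : DSep E X Y Z) :
    ∀ p : List V, IsUWalk E p → ¬ Blocked E Z p →
      (∃ x ∈ X, p.head? = some x) → (∃ y ∈ Y, p.getLast? = some y) → False := by
  intro p hu hb hx hy
  obtain ⟨q, hu', hb', hx', hy', hnd⟩ :=
    exists_nodup_active hacyc p.length p le_rfl hu hb hx hy
  exact hb' (hsep q hu' hnd hx' hy')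

end AuxDsep

/-- DAG instance of Lemma 6.8 of Fritz–Klingler: if disjoint (not necessarily
exhaustive) vertex sets `X`, `Y` are d-separated by `Z`, then the vertices of the
induced subgraph on `A := An(X ∪ Y ∪ Z)` can be partitioned as `X̃ ⊇ X`, `Ỹ ⊇ Y`, `Z`
such that `Z` still d-separates `X̃` from `Ỹ` in the induced subgraph. -/
theorem dsep_extend_partition {V : Type} [Fintype V] [DecidableEq V]
    (E : V → V → Prop) (hacyc : IsAcyclicDigraph E)
    (X Y Z : Set V)
    (hXY : Disjoint X Y) (hXZ : Disjoint X Z) (hYZ : Disjoint Y Z)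
    (hsep : DSep E X Y Z) :
    ∃ Xt Yt : Set V,
      X ⊆ Xt ∧ Y ⊆ Yt ∧
      Disjoint Xt Yt ∧ Disjoint Xt Z ∧ Disjoint Yt Z ∧
      Xt ∪ Yt ∪ Z = An E (X ∪ Y ∪ Z) ∧
      DSep (fun u w => E u w ∧ u ∈ An E (X ∪ Y ∪ Z) ∧ w ∈ An E (X ∪ Y ∪ Z))
        Xt Yt Z := by
  classical
  set A := An E (X ∪ Y ∪ Z) with hA
  set Xt : Set V := {v | v ∈ A ∧ v ∉ Z ∧ ∃ p : List V, IsUWalk E p ∧ ¬ Blocked E Z p ∧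
    (∀ u ∈ p, u ∈ A) ∧ (∃ x ∈ X, p.head? = some x) ∧ p.getLast? = some v} with hXt
  set Yt : Set V := A \ (Xt ∪ Z) with hYt
  have hXA : X ⊆ A := fun x hx => ⟨x, Or.inl (Or.inl hx), Relation.ReflTransGen.refl⟩
  have hYA : Y ⊆ A := fun y hy => ⟨y, Or.inl (Or.inr hy), Relation.ReflTransGen.refl⟩
  have hZA : Z ⊆ A := fun z hz => ⟨z, Or.inr hz, Relation.ReflTransGen.refl⟩
  have hXtA : Xt ⊆ A := fun v hv => hv.1
  have hXXt : X ⊆ Xt := by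
    intro x hx
    refine ⟨hXA hx, Set.disjoint_left.mp hXZ hx, [x], List.isChain_singleton x, ?_, ?_,
      ⟨x, hx, rfl⟩, by simp⟩
    · rintro ⟨i, a, m', b, h1, h2, h3, bad⟩
      obtain ⟨hlt, -⟩ := List.getElem?_eq_some_iff.mp h3
      simp at hlt
    · intro u hu
      have : u = x := by simpa using hu
      exact this ▸ hXA hx
  have hnoXY : ∀ v ∈ Xt, v ∈ Y → False := by
    intro v hv hvY
    obtain ⟨-, -, p, hu, hb, -, hx, hl⟩ := hv
    exact no_active_walk hacyc hsep p hu hb hx ⟨v, hvY, hl⟩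
  have hYYt : Y ⊆ Yt := by
    intro y hy
    refine ⟨hYA hy, ?_⟩
    rintro (h | h)
    · exact hnoXY y h hy
    · exact Set.disjoint_left.mp hYZ hy h
  refine ⟨Xt, Yt, hXXt, hYYt, ?_, ?_, ?_, ?_, ?_⟩
  · rw [Set.disjoint_left]
    intro v hv hv'
    exact hv'.2 (Or.inl hv)
  · rw [Set.disjoint_left]
    intro v hv
    exact hv.2.1
  · rw [Set.disjoint_left]
    intro v hv h
    exact hv.2 (Or.inr h)
  · ext v
    constructor
    · rintro ((h | h) | h)
      · exact hXtA h
      · exact h.1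
      · exact hZA h
    · intro hv
      by_cases hvx : v ∈ Xt
      · exact Or.inl (Or.inl hvx)
      by_cases hvz : v ∈ Z
      · exact Or.inr hvz
      · exact Or.inl (Or.inr ⟨hv, fun h => h.elim hvx hvz⟩)
  · intro p hup hnd hxp hyp
    by_contra hnb
    obtain ⟨aa, haXt, hheadp⟩ := hxp
    obtain ⟨bb, hbYt, hlastp⟩ := hyp
    have hbb_nXt : bb ∉ Xt := fun h => hbYt.2 (Or.inl h)
    have hlen2 : 2 ≤ p.length := by
      rcases p with _ | ⟨u, t⟩
      · simp at hheadp
      rcases t with _ | ⟨u2, t2⟩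
      · exfalso
        have h1 : u = aa := by simpa using hheadp
        have h2 : u = bb := by simpa using hlastp
        have hba : bb = aa := h2.symm.trans h1
        exact hbb_nXt (by rw [hba]; exact haXt)
      · simp
    have hmemA : ∀ u ∈ p, u ∈ A := by
      have key : ∀ q : List V, IsUWalk (fun u w => E u w ∧ u ∈ A ∧ w ∈ A) q →
          2 ≤ q.length → ∀ u ∈ q, u ∈ A := by
        intro q
        induction q with
        | nil => simp
        | cons a t ih =>
          intro hq hlq u hu
          rcases t with _ | ⟨b, t'⟩
          · simp at hlq
          · have hedge : (fun u w => E u w ∧ u ∈ A ∧ w ∈ A) a b ∨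
                (fun u w => E u w ∧ u ∈ A ∧ w ∈ A) b a := (List.isChain_cons_cons.mp hq).1
            have hab : a ∈ A ∧ b ∈ A := by
              rcases hedge with h | h
              · exact ⟨h.2.1, h.2.2⟩
              · exact ⟨h.2.2, h.2.1⟩
            rcases List.mem_cons.mp hu with rfl | hu'
            · exact hab.1
            rcases t' with _ | ⟨c, t''⟩
            · have : u = b := by simpa using hu'
              exact this ▸ hab.2
            · exact ih (List.isChain_cons_cons.mp hq).2 (by simp) u hu'
      exact key p hup hlen2
    have hupE : IsUWalk E p :=
      hup.imp (fun {a b} h => h.elim (fun h => Or.inl h.1) (fun h => Or.inr h.1))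
    have hAn'le : An (fun u w => E u w ∧ u ∈ A ∧ w ∈ A) Z ⊆ An E Z := by
      rintro u ⟨z, hz, hr⟩
      exact ⟨z, hz, Relation.ReflTransGen.mono (fun a b hab => hab.1) _ _ hr⟩
    have hbE : ¬ Blocked E Z p := by
      intro hbl
      apply hnb
      obtain ⟨i, a, m', b, h1, h2, h3, bad⟩ := hbl
      have haA : a ∈ A := hmemA a (mem_of_getElem?' h1)
      have hmA : m' ∈ A := hmemA m' (mem_of_getElem?' h2)
      have hbA : b ∈ A := hmemA b (mem_of_getElem?' h3)
      refine ⟨i, a, m', b, h1, h2, h3, ?_⟩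
      rcases bad with ⟨hpat, hZ'⟩ | ⟨⟨e1, e2⟩, hn⟩
      · refine Or.inl ⟨?_, hZ'⟩
        rcases hpat with ⟨e1, e2⟩ | ⟨e1, e2⟩ | ⟨e1, e2⟩
        · exact Or.inl ⟨⟨e1, haA, hmA⟩, ⟨e2, hmA, hbA⟩⟩
        · exact Or.inr (Or.inl ⟨⟨e1, hmA, haA⟩, ⟨e2, hbA, hmA⟩⟩)
        · exact Or.inr (Or.inr ⟨⟨e1, hmA, haA⟩, ⟨e2, hmA, hbA⟩⟩)
      · exact Or.inr ⟨⟨⟨e1, haA, hmA⟩, ⟨e2, hbA, hmA⟩⟩, fun h => hn (hAn'le h)⟩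
    obtain ⟨haA, haZ, q, hqU, hqB, hqA, hqhead, hqlast⟩ := haXt
    by_cases hcol : ∃ a' b', q[q.length - 2]? = some a' ∧ p[1]? = some b' ∧
        E a' aa ∧ E b' aa ∧ aa ∉ An E Z
    · obtain ⟨a', b', hga', hgb', hEa, hEb, hnAn⟩ := hcol
      obtain ⟨l, hch, hwXY, hsl⟩ := detour (X := X) (Y := Y) haA hnAn
      have hslZ : ∀ s ∈ aa :: l, s ∉ Z := fun s hs => (hsl s hs).1
      rcases hwXY with hwX | hwY
      · obtain ⟨huR, hbR⟩ := active_up hacyc hch hslZ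
        have hrevlast : ((aa :: l).reverse).getLast? = some aa := by
          rw [List.getLast?_reverse]
          rfl
        have hj : ∀ a1 b1, ((aa :: l).reverse)[((aa :: l).reverse).length - 2]? = some a1 →
            p[1]? = some b1 → TripleOk E Z a1 aa b1 := by
          intro a1 b1 hg1 hg2
          rintro (⟨-, hZ'⟩ | ⟨⟨hE1, -⟩, -⟩)
          · exact haZ hZ'
          · have hch' : (aa :: l).Chain' E := hch
            have hrevchain : ((aa :: l).reverse).Chain' (fun x y => E y x) :=
              List.isChain_reverse.mpr hch'
            rcases l with _ | ⟨c, l'⟩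
            · have ha1 : a1 = aa := by simpa using hg1.symm
              exact absurd (ha1 ▸ hE1) (not_self hacyc)
            · have hlen' : ((aa :: c :: l').reverse).length = l'.length + 2 := by simp
              have e1 : ((aa :: c :: l').reverse).length - 2 + 1 =
                  ((aa :: c :: l').reverse).length - 1 := by
                rw [hlen']
                omega
              have glast : ((aa :: c :: l').reverse)[((aa :: c :: l').reverse).length - 1]? =
                  some aa := by
                rw [← List.getLast?_eq_getElem?]
                exact hrevlast
              have haa1 : E aa a1 := chain'_getElem? hrevchain hg1 (by rw [e1]; exact glast)
              exact absurd hE1 (not_both hacyc haa1)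
        obtain ⟨hu2, hb2, hhd, hlst⟩ := active_append hrevlast hheadp huR hupE hbR hbE hj
        apply hbb_nXt
        refine ⟨hmemA bb (mem_of_getLast?' hlastp), fun h => hbYt.2 (Or.inr h),
          (aa :: l).reverse ++ p.tail, hu2, hb2, ?_, ?_, ?_⟩
        · intro u hu
          rcases List.mem_append.mp hu with h | h
          · exact (hsl u (List.mem_reverse.mp h)).2
          · exact hmemA u (List.mem_of_mem_tail h)
        · refine ⟨(aa :: l).getLast (List.cons_ne_nil _ _), hwX, ?_⟩
          rw [hhd, List.head?_reverse]
          exact List.getLast?_eq_getLast _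
        · rw [hlst]
          exact hlastp
      · obtain ⟨huD, hbD⟩ := active_down hacyc hch hslZ
        have hj : ∀ a1 b1, q[q.length - 2]? = some a1 → (aa :: l)[1]? = some b1 →
            TripleOk E Z a1 aa b1 := by
          intro a1 b1 hg1 hg2
          rintro (⟨-, hZ'⟩ | ⟨⟨-, hE2⟩, -⟩)
          · exact haZ hZ'
          · have haab1 : E aa b1 := chain_head_edge hch (by simpa using hg2)
            exact not_both hacyc haab1 hE2
        obtain ⟨hu2, hb2, hhd, hlst⟩ := active_append hqlast List.head?_cons hqU huD hqB hbD hj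
        refine no_active_walk hacyc hsep _ hu2 hb2 ?_ ?_
        · obtain ⟨x, hxX, hxh⟩ := hqhead
          exact ⟨x, hxX, by rw [hhd]; exact hxh⟩
        · refine ⟨(aa :: l).getLast (List.cons_ne_nil _ _), hwY, ?_⟩
          rw [hlst]
          exact List.getLast?_eq_getLast _
    · have hj : ∀ a1 b1, q[q.length - 2]? = some a1 → p[1]? = some b1 →
          TripleOk E Z a1 aa b1 := by
        intro a1 b1 hg1 hg2
        rintro (⟨-, hZ'⟩ | ⟨⟨hE1, hE2⟩, hAn2⟩)
        · exact haZ hZ'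
        · exact hcol ⟨a1, b1, hg1, hg2, hE1, hE2, hAn2⟩
      obtain ⟨hu2, hb2, hhd, hlst⟩ := active_append hqlast hheadp hqU hupE hqB hbE hj
      apply hbb_nXt
      refine ⟨hmemA bb (mem_of_getLast?' hlastp), fun h => hbYt.2 (Or.inr h),
        q ++ p.tail, hu2, hb2, ?_, ?_, ?_⟩
      · intro u hu
        rcases List.mem_append.mp hu with h | h
        · exact hqA u h
        · exact hmemA u (List.mem_of_mem_tail h)
      · obtain ⟨x, hxX, hxh⟩ := hqhead
        exact ⟨x, hxX, by rw [hhd]; exact hxh⟩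
      · rw [hlst]
        exact hlastp
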